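/- Let A = U [[T, S],[0, N]] U* with U unitary, T invertible of size r×r, and N nilpotent with N^k = 0. Then the core-EP inverse of A equals U [[T⁻¹, 0],[0, 0]] U*, i.e., X = U [[T⁻¹,0],[0,0]] U* satisfies XAX = X and range(X) = range(X*) = range(A^D). -/

import Mathlib

open Matrix

/-- `X` is the Drazin inverse of `A` with respect to the index `k`. -/
def IsDrazin {n : Type*} [Fintype n] [DecidableEq n]
    (A X : Matrix n n ℂ) (k : ℕ) : Prop :=
  A ^ (k + 1) * X = A ^ k ∧ X * A * X = X ∧ A * X = X * A

lemma range_le_aux {n : Type*} [Fintype n] [DecidableEq n] (Q C : Matrix n n ℂ) :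
    LinearMap.range (Q * C).mulVecLin ≤ LinearMap.range Q.mulVecLin := by
  rw [Matrix.mulVecLin_mul]
  exact LinearMap.range_comp_le_range _ _

lemma range_eq_aux {n : Type*} [Fintype n] [DecidableEq n] {P Q : Matrix n n ℂ}
    (h1 : ∃ C, P = Q * C) (h2 : ∃ C, Q = P * C) :
    LinearMap.range P.mulVecLin = LinearMap.range Q.mulVecLin := by
  obtain ⟨C, hC⟩ := h1
  obtain ⟨C', hC'⟩ := h2
  apply le_antisymm
  · rw [hC]; exact range_le_aux Q C
  · rw [hC']; exact range_le_aux P C'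

lemma drazin_pow_aux {R : Type*} [Ring R] {A D : R} (h2 : D * A * D = D)
    (h3 : A * D = D * A) : ∀ t, D = D ^ (t + 1) * A ^ t := by
  have hcomm : Commute A D := h3
  intro t
  induction t with
  | zero => simp
  | succ t ih =>
    calc D = D * A * D := h2.symm
      _ = D * A * (D ^ (t + 1) * A ^ t) := by rw [← ih]
      _ = D * (A * D ^ (t + 1)) * A ^ t := by noncomm_ring
      _ = D * (D ^ (t + 1) * A) * A ^ t := by rw [(hcomm.pow_right (t + 1)).eq]
      _ = (D * D ^ (t + 1)) * (A * A ^ t) := by noncomm_ring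
      _ = D ^ (t + 2) * A ^ (t + 1) := by rw [← pow_succ', ← pow_succ']

theorem stmt_19 {r m : ℕ} (k : ℕ)
    (U : Matrix (Fin r ⊕ Fin m) (Fin r ⊕ Fin m) ℂ)
    (hU : U * Uᴴ = 1 ∧ Uᴴ * U = 1)
    (T : Matrix (Fin r) (Fin r) ℂ) (hT : IsUnit T)
    (S : Matrix (Fin r) (Fin m) ℂ)
    (N : Matrix (Fin m) (Fin m) ℂ) (hN : N ^ k = 0)
    (A : Matrix (Fin r ⊕ Fin m) (Fin r ⊕ Fin m) ℂ)
    (hA : A = U * Matrix.fromBlocks T S 0 N * Uᴴ)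
    (D : Matrix (Fin r ⊕ Fin m) (Fin r ⊕ Fin m) ℂ) (j : ℕ) (hD : IsDrazin A D j) :
    (U * Matrix.fromBlocks T⁻¹ 0 0 0 * Uᴴ) * A * (U * Matrix.fromBlocks T⁻¹ 0 0 0 * Uᴴ)
        = U * Matrix.fromBlocks T⁻¹ 0 0 0 * Uᴴ ∧
      LinearMap.range (U * Matrix.fromBlocks T⁻¹ 0 0 0 * Uᴴ).mulVecLin
        = LinearMap.range ((U * Matrix.fromBlocks T⁻¹ 0 0 0 * Uᴴ)ᴴ).mulVecLin ∧
      LinearMap.range (U * Matrix.fromBlocks T⁻¹ 0 0 0 * Uᴴ).mulVecLin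
        = LinearMap.range D.mulVecLin := by
  obtain ⟨hU1, hU2⟩ := hU
  have hdet : IsUnit T.det := (Matrix.isUnit_iff_isUnit_det T).mp hT
  have TiT : T⁻¹ * T = 1 := Matrix.nonsing_inv_mul T hdet
  have TTi : T * T⁻¹ = 1 := Matrix.mul_nonsing_inv T hdet
  set M : Matrix (Fin r ⊕ Fin m) (Fin r ⊕ Fin m) ℂ := Matrix.fromBlocks T S 0 N with hM
  set B : Matrix (Fin r ⊕ Fin m) (Fin r ⊕ Fin m) ℂ := Matrix.fromBlocks T⁻¹ 0 0 0 with hB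
  -- conjugation helpers
  have conj_mul : ∀ P Q : Matrix (Fin r ⊕ Fin m) (Fin r ⊕ Fin m) ℂ,
      (U * P * Uᴴ) * (U * Q * Uᴴ) = U * (P * Q) * Uᴴ := by
    intro P Q
    have h : Uᴴ * (U * (Q * Uᴴ)) = Q * Uᴴ := by rw [← Matrix.mul_assoc, hU2, Matrix.one_mul]
    simp only [Matrix.mul_assoc]
    rw [h]
  have conj_pow : ∀ (P : Matrix (Fin r ⊕ Fin m) (Fin r ⊕ Fin m) ℂ) (l : ℕ),
      (U * P * Uᴴ) ^ l = U * P ^ l * Uᴴ := by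
    intro P l
    induction l with
    | zero => simp [hU1]
    | succ t ih => rw [pow_succ, ih, conj_mul, ← pow_succ]
  -- powers of T and T⁻¹
  have Tpow : ∀ l : ℕ, T ^ l * (T⁻¹) ^ l = 1 := by
    intro l
    induction l with
    | zero => simp
    | succ t ih =>
      rw [pow_succ, pow_succ', Matrix.mul_assoc, ← Matrix.mul_assoc T, TTi,
        Matrix.one_mul, ih]
  -- block powers
  have Mpow : ∀ l : ℕ, ∃ W, M ^ l = Matrix.fromBlocks (T ^ l) W 0 (N ^ l) := by
    intro l
    induction l with
    | zero => exact ⟨0, by simp [Matrix.fromBlocks_one]⟩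
    | succ t ih =>
      obtain ⟨W, hW⟩ := ih
      refine ⟨T ^ t * S + W * N, ?_⟩
      rw [pow_succ, hW, hM, Matrix.fromBlocks_multiply]
      simp [pow_succ]
  obtain ⟨hD1, hD2, hD3⟩ := hD
  have hcomm : Commute A D := hD3
  -- with l = k + j
  have hNl : N ^ (k + j) = 0 := by rw [pow_add, hN, zero_mul]
  obtain ⟨W, hW⟩ := Mpow (k + j)
  rw [hNl] at hW
  have hAconj : A ^ (k + j) = U * M ^ (k + j) * Uᴴ := by rw [hA, conj_pow]
  have hAl : A ^ (k + j + 1) * D = A ^ (k + j) := by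
    have h1 : A ^ (k + j + 1) = A ^ k * A ^ (j + 1) := pow_add A k (j + 1)
    have h2 : A ^ (k + j) = A ^ k * A ^ j := pow_add A k j
    rw [h1, h2, Matrix.mul_assoc, hD1]
  -- Part 1 : X A X = X
  have part1 : (U * B * Uᴴ) * A * (U * B * Uᴴ) = U * B * Uᴴ := by
    rw [hA, conj_mul, conj_mul]
    congr 1
    rw [hB, hM, Matrix.fromBlocks_multiply, Matrix.fromBlocks_multiply]
    congr 1 <;> simp [Matrix.mul_assoc, TiT, TTi]
  -- Part 2 : range X = range Xᴴ
  have hXH : (U * B * Uᴴ)ᴴ = U * Bᴴ * Uᴴ := by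
    simp [Matrix.conjTranspose_mul, Matrix.mul_assoc]
  have hBH : Bᴴ = Matrix.fromBlocks T⁻¹ᴴ 0 0 0 := by
    rw [hB, Matrix.fromBlocks_conjTranspose]; simp
  have fB1 : B = Bᴴ * Matrix.fromBlocks (Tᴴ * T⁻¹) 0 0 0 := by
    rw [hBH, Matrix.fromBlocks_multiply, hB]
    congr 1
    rw [← Matrix.mul_assoc, ← Matrix.conjTranspose_mul, TTi]
    all_goals simp
  have fB2 : Bᴴ = B * Matrix.fromBlocks (T * T⁻¹ᴴ) 0 0 0 := by
    rw [hBH, hB, Matrix.fromBlocks_multiply]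
    congr 1
    rw [← Matrix.mul_assoc, TiT]
    all_goals simp
  have part2 : LinearMap.range (U * B * Uᴴ).mulVecLin
      = LinearMap.range ((U * B * Uᴴ)ᴴ).mulVecLin := by
    rw [hXH]
    refine range_eq_aux ⟨U * Matrix.fromBlocks (Tᴴ * T⁻¹) 0 0 0 * Uᴴ, ?_⟩
      ⟨U * Matrix.fromBlocks (T * T⁻¹ᴴ) 0 0 0 * Uᴴ, ?_⟩
    · rw [conj_mul, ← fB1]
    · rw [conj_mul, ← fB2]
  -- Part 3 : range X = range D, both equal range A^(k+j)
  have fX1 : B = M ^ (k + j) * Matrix.fromBlocks ((T⁻¹) ^ (k + j) * T⁻¹) 0 0 0 := by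
    rw [hW, Matrix.fromBlocks_multiply, hB]
    congr 1
    rw [← Matrix.mul_assoc, Tpow (k + j)]
    all_goals simp
  have fX2 : M ^ (k + j) = B * Matrix.fromBlocks (T ^ (k + j + 1)) (T * W) 0 0 := by
    rw [hW, hB, Matrix.fromBlocks_multiply]
    simp [pow_succ', ← Matrix.mul_assoc, TiT]
  have hrange1 : LinearMap.range (U * B * Uᴴ).mulVecLin
      = LinearMap.range (A ^ (k + j)).mulVecLin := by
    refine range_eq_aux
      ⟨U * Matrix.fromBlocks ((T⁻¹) ^ (k + j) * T⁻¹) 0 0 0 * Uᴴ, ?_⟩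
      ⟨U * Matrix.fromBlocks (T ^ (k + j + 1)) (T * W) 0 0 * Uᴴ, ?_⟩
    · rw [hAconj, conj_mul, ← fX1]
    · rw [hAconj, conj_mul, ← fX2]
  have hrange2 : LinearMap.range D.mulVecLin
      = LinearMap.range (A ^ (k + j)).mulVecLin := by
    refine range_eq_aux ⟨D ^ (k + j + 1), ?_⟩ ⟨A ^ (k + j + 1), ?_⟩
    · have h := drazin_pow_aux hD2 hD3 (k + j)
      rw [← (hcomm.pow_pow (k + j) (k + j + 1)).eq] at h
      exact h
    · rw [← hAl]
      exact (hcomm.pow_left (k + j + 1)).eq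
  exact ⟨part1, part2, hrange1.trans hrange2.symm⟩
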